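/- Let H be a symmetric positive definite n×n matrix and G symmetric positive definite. Then the limit as ρ → ∞ of ((1/ρ)G + H)^{-1} equals H^{-1}. More generally, for H symmetric positive semidefinite and any g ∈ Range(H), the limit as ρ → ∞ of ((1/ρ)G + H)^{-1} g equals the vector G^{-1/2}(G^{-1/2} H G^{-1/2})^† G^{-1/2} g, which for the case G = I equals H^† g. -/

import Mathlib

open Matrix Filter

/-- `B` is the Moore–Penrose pseudoinverse of `A`. -/
def IsMoorePenrose {m n : ℕ} (A : Matrix (Fin m) (Fin n) ℝ)
    (B : Matrix (Fin n) (Fin m) ℝ) : Prop :=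
  A * B * A = A ∧ B * A * B = B ∧ (A * B)ᵀ = A * B ∧ (B * A)ᵀ = B * A

/-- The positive semidefinite square root of a positive semidefinite matrix
(the definition `Matrix.PosSemidef.sqrt` of the older Mathlib, since removed). -/
noncomputable def Matrix.PosSemidef.sqrt {n : Type*} [Fintype n]
    [DecidableEq n] {A : Matrix n n ℝ} (hA : A.PosSemidef) : Matrix n n ℝ :=
  hA.1.eigenvectorUnitary.1 * diagonal ((√·) ∘ hA.1.eigenvalues) *
    (star hA.1.eigenvectorUnitary : Matrix n n ℝ)

theorem Matrix.PosSemidef.posSemidef_sqrt {n : Type*} [Fintype n] [DecidableEq n]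
    {A : Matrix n n ℝ} (hA : A.PosSemidef) : hA.sqrt.PosSemidef := by
  unfold Matrix.PosSemidef.sqrt
  have hD : (diagonal ((√·) ∘ hA.1.eigenvalues)).PosSemidef :=
    PosSemidef.diagonal (fun i => Real.sqrt_nonneg _)
  have := hD.mul_mul_conjTranspose_same (hA.1.eigenvectorUnitary : Matrix n n ℝ)
  rw [star_eq_conjTranspose]
  exact this

theorem Matrix.PosSemidef.sqrt_mul_self {n : Type*} [Fintype n] [DecidableEq n]
    {A : Matrix n n ℝ} (hA : A.PosSemidef) : hA.sqrt * hA.sqrt = A := by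
  unfold Matrix.PosSemidef.sqrt
  have hUU : (star hA.1.eigenvectorUnitary : Matrix n n ℝ) * hA.1.eigenvectorUnitary.1 = 1 :=
    Unitary.coe_star_mul_self _
  have hspec := hA.1.spectral_theorem
  rw [Unitary.conjStarAlgAut_apply] at hspec
  have h : hA.1.eigenvectorUnitary.1 * diagonal ((√·) ∘ hA.1.eigenvalues) *
      (star hA.1.eigenvectorUnitary : Matrix n n ℝ) * (hA.1.eigenvectorUnitary.1 *
      diagonal ((√·) ∘ hA.1.eigenvalues) * (star hA.1.eigenvectorUnitary : Matrix n n ℝ))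
      = hA.1.eigenvectorUnitary.1 * (diagonal ((√·) ∘ hA.1.eigenvalues) *
      ((star hA.1.eigenvectorUnitary : Matrix n n ℝ) * hA.1.eigenvectorUnitary.1) *
      diagonal ((√·) ∘ hA.1.eigenvalues)) * (star hA.1.eigenvectorUnitary : Matrix n n ℝ) := by
    simp only [mul_assoc]
  rw [h, hUU, mul_one, diagonal_mul_diagonal]
  conv_rhs => rw [hspec]
  congr 3
  funext i
  simp [Real.mul_self_sqrt (hA.eigenvalues_nonneg i)]

theorem Matrix.PosSemidef.sqrt_one_real {n : Type*} [Fintype n] [DecidableEq n]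
    (hA : (1 : Matrix n n ℝ).PosSemidef) : hA.sqrt = 1 := by
  have h := hA.1.conjStarAlgAut_star_eigenvectorUnitary
  rw [Unitary.conjStarAlgAut_apply, mul_one,
    Unitary.mul_star_self_of_mem (star hA.1.eigenvectorUnitary).prop] at h
  have hev : ∀ i, hA.1.eigenvalues i = 1 := fun i => by
    have := congrFun (congrFun h i) i
    simpa using this.symm
  unfold Matrix.PosSemidef.sqrt
  have hd : diagonal ((√·) ∘ hA.1.eigenvalues) = 1 := by
    ext i j
    simp [diagonal_apply, hev, one_apply]
  rw [hd, mul_one]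
  exact Unitary.mul_star_self_of_mem hA.1.eigenvectorUnitary.prop

private lemma realConjT {n : ℕ} (A : Matrix (Fin n) (Fin n) ℝ) : Aᴴ = Aᵀ := by
  ext i j; simp [conjTranspose_apply]

/-- Uniqueness of the Moore–Penrose pseudoinverse. -/
private lemma mp_unique {n : ℕ} {A B C : Matrix (Fin n) (Fin n) ℝ}
    (hB : IsMoorePenrose A B) (hC : IsMoorePenrose A C) : B = C := by
  obtain ⟨hB1, hB2, hB3, hB4⟩ := hB
  obtain ⟨hC1, hC2, hC3, hC4⟩ := hC
  have h1 : A * B = A * C := by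
    calc A * B = (A * B)ᵀ := hB3.symm
      _ = Bᵀ * Aᵀ := transpose_mul A B
      _ = Bᵀ * (A * C * A)ᵀ := by rw [hC1]
      _ = Bᵀ * (Aᵀ * (A * C)ᵀ) := by rw [transpose_mul (A * C) A]
      _ = (Bᵀ * Aᵀ) * (A * C)ᵀ := by rw [mul_assoc]
      _ = (A * B)ᵀ * (A * C) := by rw [← transpose_mul A B, hC3]
      _ = (A * B) * (A * C) := by rw [hB3]
      _ = (A * B * A) * C := by rw [mul_assoc (A * B) A C]
      _ = A * C := by rw [hB1]
  have h2 : B * A = C * A := by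
    calc B * A = (B * A)ᵀ := hB4.symm
      _ = Aᵀ * Bᵀ := transpose_mul B A
      _ = (A * C * A)ᵀ * Bᵀ := by rw [hC1]
      _ = (A * (C * A))ᵀ * Bᵀ := by rw [mul_assoc]
      _ = ((C * A)ᵀ * Aᵀ) * Bᵀ := by rw [transpose_mul A (C * A)]
      _ = (C * A)ᵀ * (Aᵀ * Bᵀ) := mul_assoc _ _ _
      _ = (C * A) * (B * A)ᵀ := by rw [hC4, ← transpose_mul B A]
      _ = (C * A) * (B * A) := by rw [hB4]
      _ = C * (A * B * A) := by rw [mul_assoc, ← mul_assoc A B A]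
      _ = C * A := by rw [hB1]
  calc B = B * A * B := hB2.symm
    _ = C * A * B := by rw [h2]
    _ = C * (A * B) := mul_assoc _ _ _
    _ = C * (A * C) := by rw [h1]
    _ = C * A * C := (mul_assoc _ _ _).symm
    _ = C := hC2

/-- The key quantitative bound: `‖ρ⁻¹ • (ρ⁻¹ • 1 + K)⁻¹ w‖ ≤ √(w ⬝ᵥ w)` for `K` PSD. -/
private lemma inv_smul_mulVec_bound {n : ℕ} {K : Matrix (Fin n) (Fin n) ℝ} (hK : K.PosSemidef)
    {ρ : ℝ} (hρ : 0 < ρ) (w : Fin n → ℝ) :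
    ‖ρ⁻¹ • ((ρ⁻¹ • (1 : Matrix (Fin n) (Fin n) ℝ) + K)⁻¹ *ᵥ w)‖ ≤ Real.sqrt (w ⬝ᵥ w) := by
  set C := ρ⁻¹ • (1 : Matrix (Fin n) (Fin n) ℝ) + K with hC
  have hCpd : C.PosDef := by
    have h1 : (ρ⁻¹ • (1 : Matrix (Fin n) (Fin n) ℝ)).PosDef := by
      rw [smul_one_eq_diagonal]
      exact posDef_diagonal_iff.mpr fun _ => inv_pos.mpr hρ
    exact h1.add_posSemidef hK
  set v := C⁻¹ *ᵥ w with hv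
  have hw : C *ᵥ v = w := by
    rw [hv, mulVec_mulVec, mul_nonsing_inv C ((isUnit_iff_isUnit_det C).mp hCpd.isUnit),
      one_mulVec]
  have hKv : 0 ≤ v ⬝ᵥ (K *ᵥ v) := by
    have h := hK.dotProduct_mulVec_nonneg v
    simpa using h
  have hquad : ρ⁻¹ * (v ⬝ᵥ v) ≤ v ⬝ᵥ w := by
    have h : v ⬝ᵥ w = ρ⁻¹ * (v ⬝ᵥ v) + v ⬝ᵥ (K *ᵥ v) := by
      rw [← hw, hC, add_mulVec, smul_mulVec, one_mulVec, dotProduct_add,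
        dotProduct_smul, smul_eq_mul]
    linarith
  have hCS : (v ⬝ᵥ w) * (v ⬝ᵥ w) ≤ (v ⬝ᵥ v) * (w ⬝ᵥ w) := by
    have h := Finset.sum_mul_sq_le_sq_mul_sq Finset.univ v w
    simpa [dotProduct, pow_two] using h
  have hvv : (0 : ℝ) ≤ v ⬝ᵥ v := Finset.sum_nonneg fun i _ => mul_self_nonneg (v i)
  rcases eq_or_lt_of_le hvv with h0 | hpos
  · have hv0 : v = 0 := dotProduct_self_eq_zero.mp h0.symm
    rw [hv0, smul_zero, norm_zero]
    exact Real.sqrt_nonneg _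
  · have hρi : (0 : ℝ) < ρ⁻¹ := inv_pos.mpr hρ
    have hkey : (ρ⁻¹ * ρ⁻¹) * (v ⬝ᵥ v) ≤ w ⬝ᵥ w := by
      have h2 : (ρ⁻¹ * (v ⬝ᵥ v)) * (ρ⁻¹ * (v ⬝ᵥ v)) ≤ (v ⬝ᵥ w) * (v ⬝ᵥ w) :=
        mul_self_le_mul_self (by positivity) hquad
      nlinarith [h2, hCS, hpos]
    refine (pi_norm_le_iff_of_nonneg (Real.sqrt_nonneg _)).mpr fun i => ?_
    rw [Pi.smul_apply, Real.norm_eq_abs, smul_eq_mul]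
    apply Real.abs_le_sqrt
    have hvi : v i * v i ≤ v ⬝ᵥ v :=
      Finset.single_le_sum (f := fun j => v j * v j) (fun j _ => mul_self_nonneg _)
        (Finset.mem_univ i)
    calc (ρ⁻¹ * v i) ^ 2 = (ρ⁻¹ * ρ⁻¹) * (v i * v i) := by ring
      _ ≤ (ρ⁻¹ * ρ⁻¹) * (v ⬝ᵥ v) := by
          exact mul_le_mul_of_nonneg_left hvi (by positivity)
      _ ≤ w ⬝ᵥ w := hkey

theorem limit_of_regularized_inverse {n : ℕ} (H G : Matrix (Fin n) (Fin n) ℝ)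
    (hH : H.PosSemidef) (hG : G.PosDef) :
    (H.PosDef →
      Tendsto (fun ρ : ℝ => (ρ⁻¹ • G + H)⁻¹) atTop (nhds H⁻¹)) ∧
    (∀ (g : Fin n → ℝ) (Md Hd : Matrix (Fin n) (Fin n) ℝ),
      g ∈ LinearMap.range H.mulVecLin →
      IsMoorePenrose ((hG.posSemidef.sqrt)⁻¹ * H * (hG.posSemidef.sqrt)⁻¹) Md →
      IsMoorePenrose H Hd →
      Tendsto (fun ρ : ℝ => ((ρ⁻¹ • G + H)⁻¹).mulVec g) atTop
        (nhds ((hG.posSemidef.sqrt)⁻¹.mulVec (Md.mulVec ((hG.posSemidef.sqrt)⁻¹.mulVec g)))) ∧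
      (G = 1 →
        (hG.posSemidef.sqrt)⁻¹.mulVec (Md.mulVec ((hG.posSemidef.sqrt)⁻¹.mulVec g)) =
          Hd.mulVec g)) := by
  constructor
  · -- Part 1: positive definite case, by continuity of matrix inversion
    intro hHpd
    have hc : ContinuousAt Inv.inv H := by
      apply continuousAt_matrix_inv H
      rw [Ring.inverse_eq_inv']
      exact continuousAt_inv₀ hHpd.det_pos.ne'
    have h2 : Tendsto (fun ρ : ℝ => ρ⁻¹ • G + H) atTop (nhds H) := by
      have h0 : Tendsto (fun ρ : ℝ => ρ⁻¹) atTop (nhds (0 : ℝ)) := tendsto_inv_atTop_zero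
      have := (h0.smul_const G).add_const H
      simpa using this
    exact Filter.Tendsto.comp hc h2
  · intro g Md Hd hg hMd hHd
    obtain ⟨x, hx⟩ := hg
    set Q := hG.posSemidef.sqrt with hQdef
    have hQpsd : Q.PosSemidef := hG.posSemidef.posSemidef_sqrt
    have hQQ : Q * Q = G := hG.posSemidef.sqrt_mul_self
    have hQherm : Qᵀ = Q := by rw [← realConjT]; exact hQpsd.1
    have hdetQ : IsUnit Q.det := by
      apply isUnit_iff_ne_zero.mpr
      intro h
      have hd := hG.det_pos
      rw [← hQQ, det_mul, h, mul_zero] at hd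
      exact lt_irrefl 0 hd
    set S := Q⁻¹ with hSdef
    have hQS : Q * S = 1 := mul_nonsing_inv Q hdetQ
    have hSQ : S * Q = 1 := nonsing_inv_mul Q hdetQ
    have hSsymm : Sᵀ = S := by rw [hSdef, transpose_nonsing_inv, hQherm]
    set K := S * H * S with hKdef
    have hKpsd : K.PosSemidef := by
      have h := hH.conjTranspose_mul_mul_same S
      rwa [realConjT, hSsymm, ← hKdef] at h
    have hKsymm : Kᵀ = K := by rw [← realConjT]; exact hKpsd.1
    set u := Q *ᵥ x with hudef
    -- S g = K u
    have hu : K *ᵥ u = S *ᵥ g := by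
      rw [hudef, ← hx, mulVecLin_apply, hKdef]
      simp only [mulVec_mulVec]
      rw [mul_assoc (S * H) S Q, hSQ, mul_one]
    -- the key pointwise formula for ρ > 0
    have key : ∀ ρ : ℝ, 0 < ρ →
        ((ρ⁻¹ • G + H)⁻¹) *ᵥ g
          = S *ᵥ ((Md * K) *ᵥ u - ρ⁻¹ • (Mdᵀ *ᵥ u)
              + ρ⁻¹ • (ρ⁻¹ • ((ρ⁻¹ • (1 : Matrix (Fin n) (Fin n) ℝ) + K)⁻¹ *ᵥ (Mdᵀ *ᵥ u)))) := by
      intro ρ hρ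
      set C := ρ⁻¹ • (1 : Matrix (Fin n) (Fin n) ℝ) + K with hC
      have hCpd : C.PosDef := by
        have h1 : (ρ⁻¹ • (1 : Matrix (Fin n) (Fin n) ℝ)).PosDef := by
          rw [smul_one_eq_diagonal]
          exact posDef_diagonal_iff.mpr fun _ => inv_pos.mpr hρ
        exact h1.add_posSemidef hKpsd
      have hCdet : IsUnit C.det := (isUnit_iff_isUnit_det C).mp hCpd.isUnit
      have hAC : C⁻¹ * C = 1 := nonsing_inv_mul C hCdet
      have hAK : C⁻¹ * K = 1 - ρ⁻¹ • C⁻¹ := by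
        have h : C⁻¹ * (ρ⁻¹ • (1 : Matrix (Fin n) (Fin n) ℝ) + K) = 1 := by
          rw [← hC]; exact hAC
        rw [mul_add, Matrix.mul_smul, mul_one] at h
        exact eq_sub_of_add_eq' h
      have hBfact : ρ⁻¹ • G + H = Q * C * Q := by
        have hQKQ : Q * K * Q = H := by
          rw [hKdef]
          calc Q * (S * H * S) * Q = (Q * S) * H * (S * Q) := by noncomm_ring
            _ = H := by rw [hQS, hSQ, one_mul, mul_one]
        rw [hC, mul_add, add_mul, Matrix.mul_smul, mul_one, Matrix.smul_mul, hQQ, hQKQ]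
      have hBinv : (ρ⁻¹ • G + H)⁻¹ = S * C⁻¹ * S := by
        rw [hSdef, hBfact, Matrix.mul_inv_rev, Matrix.mul_inv_rev, mul_assoc]
      have hKP : K * (Md * K) = K := by rw [← mul_assoc]; exact hMd.1
      have hP : Md * K = K * Mdᵀ := by
        calc Md * K = (Md * K)ᵀ := hMd.2.2.2.symm
          _ = Kᵀ * Mdᵀ := transpose_mul _ _
          _ = K * Mdᵀ := by rw [hKsymm]
      have hCK : C⁻¹ * K
          = Md * K - ρ⁻¹ • Mdᵀ + ρ⁻¹ • (ρ⁻¹ • (C⁻¹ * Mdᵀ)) := by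
        calc C⁻¹ * K = C⁻¹ * (K * (Md * K)) := by rw [hKP]
          _ = (C⁻¹ * K) * (Md * K) := (mul_assoc C⁻¹ K (Md * K)).symm
          _ = (1 - ρ⁻¹ • C⁻¹) * (Md * K) := by rw [hAK]
          _ = Md * K - ρ⁻¹ • (C⁻¹ * (Md * K)) := by
              rw [sub_mul, one_mul, Matrix.smul_mul]
          _ = Md * K - ρ⁻¹ • (C⁻¹ * (K * Mdᵀ)) := by rw [hP]
          _ = Md * K - ρ⁻¹ • ((C⁻¹ * K) * Mdᵀ) := by rw [mul_assoc C⁻¹ K Mdᵀ]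
          _ = Md * K - ρ⁻¹ • ((1 - ρ⁻¹ • C⁻¹) * Mdᵀ) := by rw [hAK]
          _ = Md * K - ρ⁻¹ • Mdᵀ + ρ⁻¹ • (ρ⁻¹ • (C⁻¹ * Mdᵀ)) := by
              rw [sub_mul, one_mul, Matrix.smul_mul, smul_sub]; abel
      rw [hBinv]
      calc (S * C⁻¹ * S) *ᵥ g
          = (S * C⁻¹) *ᵥ (S *ᵥ g) := (mulVec_mulVec g (S * C⁻¹) S).symm
        _ = (S * C⁻¹) *ᵥ (K *ᵥ u) := by rw [hu]
        _ = S *ᵥ (C⁻¹ *ᵥ (K *ᵥ u)) := (mulVec_mulVec (K *ᵥ u) S C⁻¹).symm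
        _ = S *ᵥ ((C⁻¹ * K) *ᵥ u) := by rw [mulVec_mulVec u C⁻¹ K]
        _ = S *ᵥ ((Md * K) *ᵥ u - ρ⁻¹ • (Mdᵀ *ᵥ u)
              + ρ⁻¹ • (ρ⁻¹ • (C⁻¹ *ᵥ (Mdᵀ *ᵥ u)))) := by
            rw [hCK]
            simp only [Matrix.add_mulVec, Matrix.sub_mulVec, Matrix.smul_mulVec,
              mulVec_mulVec]
    constructor
    · -- the limit
      have h2 : Tendsto (fun ρ : ℝ => ρ⁻¹ • (Mdᵀ *ᵥ u)) atTop (nhds 0) := by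
        have h0 : Tendsto (fun ρ : ℝ => ρ⁻¹) atTop (nhds (0 : ℝ)) := tendsto_inv_atTop_zero
        have := h0.smul_const (Mdᵀ *ᵥ u)
        simpa using this
      have h3 : Tendsto (fun ρ : ℝ =>
          ρ⁻¹ • (ρ⁻¹ • ((ρ⁻¹ • (1 : Matrix (Fin n) (Fin n) ℝ) + K)⁻¹ *ᵥ (Mdᵀ *ᵥ u))))
          atTop (nhds 0) := by
        have hb : ∀ᶠ ρ : ℝ in atTop,
            ‖ρ⁻¹ • (ρ⁻¹ • ((ρ⁻¹ • (1 : Matrix (Fin n) (Fin n) ℝ) + K)⁻¹ *ᵥ (Mdᵀ *ᵥ u)))‖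
              ≤ ρ⁻¹ * Real.sqrt ((Mdᵀ *ᵥ u) ⬝ᵥ (Mdᵀ *ᵥ u)) := by
          filter_upwards [eventually_ge_atTop (1 : ℝ)] with ρ hρ
          have hρ0 : (0 : ℝ) < ρ := lt_of_lt_of_le one_pos hρ
          rw [norm_smul, Real.norm_eq_abs, abs_of_pos (inv_pos.mpr hρ0)]
          exact mul_le_mul_of_nonneg_left (inv_smul_mulVec_bound hKpsd hρ0 _)
            (inv_nonneg.mpr hρ0.le)
        have hg0 : Tendsto (fun ρ : ℝ => ρ⁻¹ * Real.sqrt ((Mdᵀ *ᵥ u) ⬝ᵥ (Mdᵀ *ᵥ u)))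
            atTop (nhds 0) := by
          have h0 : Tendsto (fun ρ : ℝ => ρ⁻¹) atTop (nhds (0 : ℝ)) := tendsto_inv_atTop_zero
          have := h0.mul_const (Real.sqrt ((Mdᵀ *ᵥ u) ⬝ᵥ (Mdᵀ *ᵥ u)))
          simpa using this
        exact squeeze_zero_norm' hb hg0
      have hinner : Tendsto (fun ρ : ℝ => (Md * K) *ᵥ u - ρ⁻¹ • (Mdᵀ *ᵥ u)
          + ρ⁻¹ • (ρ⁻¹ • ((ρ⁻¹ • (1 : Matrix (Fin n) (Fin n) ℝ) + K)⁻¹ *ᵥ (Mdᵀ *ᵥ u))))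
          atTop (nhds ((Md * K) *ᵥ u)) := by
        have hconst : Tendsto (fun _ : ℝ => (Md * K) *ᵥ u) atTop
            (nhds ((Md * K) *ᵥ u)) := tendsto_const_nhds
        have := (hconst.sub h2).add h3
        simpa using this
      have hS : Continuous (fun v : Fin n → ℝ => S *ᵥ v) :=
        continuous_const.matrix_mulVec continuous_id
      have hfinal0 : Tendsto (fun ρ : ℝ => S *ᵥ ((Md * K) *ᵥ u - ρ⁻¹ • (Mdᵀ *ᵥ u)
          + ρ⁻¹ • (ρ⁻¹ • ((ρ⁻¹ • (1 : Matrix (Fin n) (Fin n) ℝ) + K)⁻¹ *ᵥ (Mdᵀ *ᵥ u)))))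
          atTop (nhds (S *ᵥ ((Md * K) *ᵥ u))) :=
        (hS.tendsto _).comp hinner
      have htarget : S *ᵥ (Md *ᵥ (S *ᵥ g)) = S *ᵥ ((Md * K) *ᵥ u) := by
        rw [← hu, mulVec_mulVec u Md K]
      rw [htarget]
      apply hfinal0.congr'
      filter_upwards [eventually_ge_atTop (1 : ℝ)] with ρ hρ
      exact (key ρ (lt_of_lt_of_le one_pos hρ)).symm
    · -- the case G = 1
      intro hG1
      subst hG1
      have hQ1 : Q = 1 := by
        rw [hQdef]
        exact Matrix.PosSemidef.sqrt_one_real hG.posSemidef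
      have hS1 : S = 1 := by rw [hSdef, hQ1, inv_one]
      have hK' : K = H := by rw [hKdef, hS1, one_mul, mul_one]
      have hMdH : IsMoorePenrose H Md := hK' ▸ hMd
      have hMdHd : Md = Hd := mp_unique hMdH hHd
      rw [hS1, hMdHd, one_mulVec, one_mulVec]
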